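/- Let H : ℝⁿ → ℝⁿ be a polynomial map all of whose components are homogeneous of degree 3, and let F = X + H be the corresponding Yagzhev map, where X is the identity. Then the Jacobian determinant j(F), as a polynomial in x₁,…,xₙ, is a nonzero constant (necessarily equal to 1) if and only if the Jacobian matrix J(H), regarded as an n×n matrix with entries in the polynomial ring ℝ[x₁,…,xₙ], is nilpotent. -/

import Mathlib

noncomputable section

open MvPolynomial in
private lemma pderiv_homog18 {n : ℕ} {p : MvPolynomial (Fin n) ℝ}
    (hp : p.IsHomogeneous 3) (j : Fin n) : (pderiv j p).IsHomogeneous 2 := by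
  classical
  have hrep : pderiv j p
      = ∑ s ∈ p.support, monomial (s - Finsupp.single j 1) (coeff s p * s j) := by
    conv_lhs => rw [← support_sum_monomial_coeff p]
    rw [map_sum]
    simp [pderiv_monomial]
  rw [hrep]
  apply IsHomogeneous.sum
  intro s hs
  rcases eq_or_ne (coeff s p * (s j : ℝ)) 0 with h0 | h0
  · rw [h0, monomial_zero]
    exact isHomogeneous_zero _ _ _
  · apply isHomogeneous_monomial
    have hsj : s j ≠ 0 := by
      intro h; apply h0; simp [h]
    have hc : coeff s p ≠ 0 := by
      intro h; apply h0; simp [h]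
    have hdeg : s.degree = 3 := by
      by_contra hne
      exact hc (hp.coeff_eq_zero hne)
    have hle : Finsupp.single j 1 ≤ s := by
      rw [Finsupp.single_le_iff]
      omega
    have : (s - Finsupp.single j 1) + Finsupp.single j 1 = s := by
      ext i
      rcases eq_or_ne i j with rfl | hij
      · simp; omega
      · simp [Finsupp.single_eq_of_ne' (Ne.symm hij)]
    have h2 : (s - Finsupp.single j 1).degree + 1 = 3 := by
      have h3 := congrArg (Finsupp.weight (1 : Fin n → ℕ)) this
      rw [map_add] at h3
      rw [show (1 : Fin n → ℕ) = fun _ => 1 from rfl, ← Finsupp.degree_eq_weight_one] at h3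
      have h4 : (Finsupp.single j 1).degree = 1 := by
        simp [Finsupp.degree_apply, Finsupp.support_single_ne_zero]
      rw [h4, hdeg] at h3
      omega
    omega

open MvPolynomial in
private lemma eval_smul_homog18 {n : ℕ} {p : MvPolynomial (Fin n) ℝ} {d : ℕ}
    (hp : p.IsHomogeneous d) (t : ℝ) (a : Fin n → ℝ) :
    eval (t • a) p = t ^ d * eval a p := by
  rw [eval_eq, eval_eq, Finset.mul_sum]
  apply Finset.sum_congr rfl
  intro s hs
  have hdeg : s.degree = d := by
    by_contra hne
    exact (mem_support_iff.mp hs) (hp.coeff_eq_zero hne)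
  have : ∏ i ∈ s.support, (t • a) i ^ s i
      = t ^ d * ∏ i ∈ s.support, a i ^ s i := by
    simp only [Pi.smul_apply, smul_eq_mul, mul_pow, Finset.prod_mul_distrib]
    rw [Finset.prod_pow_eq_pow_sum]
    congr 1
    rw [← hdeg, Finsupp.degree_apply]
  rw [this]; ring

open Polynomial in
private lemma eval_charpoly18 {n : ℕ} (A : Matrix (Fin n) (Fin n) ℝ) (s : ℝ) :
    Polynomial.eval s A.charpoly = (s • (1 : Matrix (Fin n) (Fin n) ℝ) - A).det := by
  rw [Matrix.charpoly, ← Polynomial.coe_evalRingHom, RingHom.map_det]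
  congr 1
  ext i j
  rcases eq_or_ne i j with rfl | hij
  · simp [Matrix.charmatrix_apply_eq, Matrix.one_apply_eq]
  · simp [Matrix.charmatrix_apply_ne _ _ _ hij, Matrix.one_apply_ne hij]

open Polynomial in
private lemma charpoly_eq18 {n : ℕ} (A : Matrix (Fin n) (Fin n) ℝ)
    (h : ∀ s : ℝ, (1 + s • A).det = 1) : A.charpoly = Polynomial.X ^ n := by
  have key : ∀ s : ℝ, s ≠ 0 → Polynomial.eval s A.charpoly = s ^ n := by
    intro s hs
    rw [eval_charpoly18]
    have h1 : s • (1 : Matrix (Fin n) (Fin n) ℝ) - A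
        = s • (1 + (-s⁻¹) • A) := by
      rw [smul_add, smul_smul, mul_neg, mul_inv_cancel₀ hs, neg_smul, one_smul,
        sub_eq_add_neg]
    rw [h1, Matrix.det_smul, h (-s⁻¹)]
    simp
  have h2 : A.charpoly - Polynomial.X ^ n = 0 := by
    apply Polynomial.eq_zero_of_infinite_isRoot
    apply Set.Infinite.mono (s := {x : ℝ | x ≠ 0})
    · intro x hx
      simp only [Set.mem_setOf_eq, Polynomial.IsRoot, Polynomial.eval_sub,
        Polynomial.eval_pow, Polynomial.eval_X]
      rw [key x hx]; ring
    · exact Set.Finite.infinite_compl (Set.finite_singleton 0)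
  linear_combination (norm := ring_nf) h2

open Polynomial in
private lemma eval_charpolyRev_neg18 {n : ℕ} (B : Matrix (Fin n) (Fin n) ℝ) (s : ℝ) :
    Polynomial.eval s (Matrix.charpolyRev (-B)) = (1 + s • B).det := by
  rw [Matrix.charpolyRev, ← Polynomial.coe_evalRingHom, RingHom.map_det]
  congr 1
  ext i j
  rcases eq_or_ne i j with rfl | hij
  · simp only [RingHom.mapMatrix_apply, Matrix.map_apply, Matrix.sub_apply,
      Matrix.smul_apply, Matrix.add_apply, Matrix.one_apply_eq, Matrix.neg_apply,
      Polynomial.coe_evalRingHom, smul_eq_mul, map_sub, map_mul, eval_one, eval_X,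
      eval_C, map_one, map_neg, eval_neg, eval_mul]
    ring
  · simp only [RingHom.mapMatrix_apply, Matrix.map_apply, Matrix.sub_apply,
      Matrix.smul_apply, Matrix.add_apply, Matrix.one_apply_ne hij, Matrix.neg_apply,
      Polynomial.coe_evalRingHom, smul_eq_mul, map_sub, map_mul, eval_X, eval_C,
      map_zero, map_neg, eval_zero, eval_neg, eval_mul]
    ring

open Polynomial in
private lemma eval_neg_one_charpolyRev18 {R : Type*} [CommRing R] {n : ℕ}
    (M : Matrix (Fin n) (Fin n) R) :
    Polynomial.eval (-1) M.charpolyRev = (1 + M).det := by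
  rw [Matrix.charpolyRev, ← Polynomial.coe_evalRingHom, RingHom.map_det]
  congr 1
  ext i j
  rcases eq_or_ne i j with rfl | hij
  · simp only [RingHom.mapMatrix_apply, Matrix.map_apply, Matrix.sub_apply,
      Matrix.smul_apply, Matrix.add_apply, Matrix.one_apply_eq, Matrix.neg_apply,
      Polynomial.coe_evalRingHom, smul_eq_mul, map_sub, map_mul, eval_one, eval_X,
      eval_C, map_one, map_neg, eval_neg, eval_mul]
    ring
  · simp only [RingHom.mapMatrix_apply, Matrix.map_apply, Matrix.sub_apply,
      Matrix.smul_apply, Matrix.add_apply, Matrix.one_apply_ne hij, Matrix.neg_apply,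
      Polynomial.coe_evalRingHom, smul_eq_mul, map_sub, map_mul, eval_X, eval_C,
      map_zero, map_neg, eval_zero, eval_neg, eval_mul]
    ring

/-- for a Yagzhev map F = X + H (components of H homogeneous of
degree 3) the formal Jacobian determinant j(F) = det(1 + J(H)) is a nonzero
constant iff the Jacobian matrix J(H) over ℝ[x₁,…,xₙ] is nilpotent; in that case
the constant is necessarily 1. -/
theorem stmt18 (n : ℕ) (H : Fin n → MvPolynomial (Fin n) ℝ)
    (hH : ∀ i, (H i).IsHomogeneous 3)
    (JH : Matrix (Fin n) (Fin n) (MvPolynomial (Fin n) ℝ))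
    (hJH : ∀ i j, JH i j = MvPolynomial.pderiv j (H i)) :
    ((∃ c : ℝ, c ≠ 0 ∧ (1 + JH).det = MvPolynomial.C c) ↔ IsNilpotent JH) ∧
    ((∃ c : ℝ, c ≠ 0 ∧ (1 + JH).det = MvPolynomial.C c) → (1 + JH).det = 1) := by
  classical
  have hhom : ∀ i j, (JH i j).IsHomogeneous 2 := fun i j => by
    rw [hJH]; exact pderiv_homog18 (hH i) j
  -- forward: nilpotent implies det = 1
  have fwd : IsNilpotent JH → (1 + JH).det = 1 := by
    intro hN
    have hu := Matrix.isUnit_charpolyRev_of_isNilpotent hN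
    obtain ⟨r, -, hCr⟩ := Polynomial.isUnit_iff.mp hu
    have h0 : r = 1 := by
      have h := Matrix.eval_charpolyRev (M := JH)
      rw [← hCr, Polynomial.eval_C] at h
      exact h
    have h1 : Matrix.charpolyRev JH = 1 := by rw [← hCr, h0, map_one]
    have h2 := eval_neg_one_charpolyRev18 JH
    rw [h1] at h2
    simpa using h2.symm
  -- converse: det = C c (c ≠ 0) implies nilpotent
  have key : (∃ c : ℝ, c ≠ 0 ∧ (1 + JH).det = MvPolynomial.C c) → IsNilpotent JH := by
    rintro ⟨c, hc, hdet⟩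
    set A : (Fin n → ℝ) → Matrix (Fin n) (Fin n) ℝ :=
      fun a => JH.map (MvPolynomial.eval a) with hA
    have hAdet : ∀ a : Fin n → ℝ, (1 + A a).det = c := by
      intro a
      have h1 := RingHom.map_det (MvPolynomial.eval a) (1 + JH)
      rw [hdet, MvPolynomial.eval_C, RingHom.mapMatrix_apply] at h1
      have h2 : (1 + JH).map (MvPolynomial.eval a) = 1 + A a := by
        ext i j
        rcases eq_or_ne i j with rfl | hij
        · simp [Matrix.map_apply, Matrix.add_apply, Matrix.one_apply, hA]
        · simp [Matrix.map_apply, Matrix.add_apply, Matrix.one_apply, hij, hA]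
      rw [h2] at h1
      exact h1.symm
    have hsc : ∀ (t : ℝ) (a : Fin n → ℝ), A (t • a) = t ^ 2 • A a := by
      intro t a; ext i j
      simp [hA, Matrix.map_apply, eval_smul_homog18 (hhom i j)]
    have hc1 : c = 1 := by
      have h0 : A 0 = 0 := by
        have h := hsc 0 0
        simpa using h
      have h := hAdet 0
      rw [h0] at h
      simpa using h.symm
    have hone : ∀ (a : Fin n → ℝ) (s : ℝ), (1 + s • A a).det = 1 := by
      intro a
      have h1 : ∀ t : ℝ, Polynomial.eval (t ^ 2) (Matrix.charpolyRev (-(A a))) = 1 := by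
        intro t
        rw [eval_charpolyRev_neg18, ← hsc t a, hAdet (t • a), hc1]
      have h2 : Matrix.charpolyRev (-(A a)) - Polynomial.C 1 = 0 := by
        apply Polynomial.eq_zero_of_infinite_isRoot
        apply Set.Infinite.mono (s := Set.Ici (0 : ℝ))
        · intro x hx
          obtain ⟨t, rfl⟩ : ∃ t : ℝ, x = t ^ 2 :=
            ⟨Real.sqrt x, (Real.sq_sqrt hx).symm⟩
          simp [Polynomial.IsRoot, h1 t]
        · exact Set.Ici_infinite 0
      have h3 : Matrix.charpolyRev (-(A a)) = Polynomial.C 1 := by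
        have := sub_eq_zero.mp h2; exact this
      intro s
      have h4 := eval_charpolyRev_neg18 (A a) s
      rw [h3, Polynomial.eval_C] at h4
      exact h4.symm
    have hch : ∀ a, (A a).charpoly = Polynomial.X ^ n :=
      fun a => charpoly_eq18 _ (hone a)
    have hchJH : JH.charpoly = Polynomial.X ^ n := by
      refine Polynomial.ext fun k => ?_
      rw [Polynomial.coeff_X_pow]
      apply MvPolynomial.funext
      intro a
      have h1 : MvPolynomial.eval a (JH.charpoly.coeff k)
          = (JH.charpoly.map (MvPolynomial.eval a)).coeff k :=
        (Polynomial.coeff_map _ _).symm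
      rw [h1, ← Matrix.charpoly_map JH (MvPolynomial.eval a)]
      have h2 : JH.map (MvPolynomial.eval a) = A a := rfl
      rw [h2, hch a, Polynomial.coeff_X_pow]
      split <;> simp
    have h5 := Matrix.aeval_self_charpoly JH
    rw [hchJH] at h5
    refine ⟨n, ?_⟩
    simpa using h5
  refine ⟨⟨key, fun hN => ⟨1, one_ne_zero, by rw [fwd hN, MvPolynomial.C_1]⟩⟩,
    fun h => fwd (key h)⟩
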